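/- If p, q, r are three pairwise distinct subspaces of ℂ^m (m even), each of dimension m/2, with pairwise trivial intersections, then dim α(p,q,r) = m/2, where α(p,q,r) = (a ⊔ b) ⊓ (aᗮ ⊔ bᗮ) with a = p ⊔ (q ⊓ r) and b = (p ⊔ q) ⊓ (p ⊔ r). -/

import Mathlib

theorem dim_alpha_generic {m : ℕ} (hm : Even m)
    (p q r : Submodule ℂ (EuclideanSpace ℂ (Fin m)))
    (hpq : p ≠ q) (hpr : p ≠ r) (hqr : q ≠ r)
    (hdp : Module.finrank ℂ p = m / 2)
    (hdq : Module.finrank ℂ q = m / 2)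
    (hdr : Module.finrank ℂ r = m / 2)
    (hpq' : p ⊓ q = ⊥) (hpr' : p ⊓ r = ⊥) (hqr' : q ⊓ r = ⊥) :
    Module.finrank ℂ ↥(((p ⊔ (q ⊓ r)) ⊔ ((p ⊔ q) ⊓ (p ⊔ r))) ⊓ ((p ⊔ (q ⊓ r))ᗮ ⊔ ((p ⊔ q) ⊓ (p ⊔ r))ᗮ)) =
      m / 2 := by
  have htot : Module.finrank ℂ (EuclideanSpace ℂ (Fin m)) = m := by
    simp [finrank_euclideanSpace_fin]
  have hhalf : m / 2 + m / 2 = m := by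
    obtain ⟨k, hk⟩ := hm; omega
  have hsupq : p ⊔ q = ⊤ := by
    apply Submodule.eq_top_of_finrank_eq
    have := Submodule.finrank_sup_add_finrank_inf_eq p q
    rw [hpq', hdp, hdq] at this
    simp at this
    omega
  have hsupr : p ⊔ r = ⊤ := by
    apply Submodule.eq_top_of_finrank_eq
    have := Submodule.finrank_sup_add_finrank_inf_eq p r
    rw [hpr', hdp, hdr] at this
    simp at this
    omega
  rw [hqr', hsupq, hsupr]
  have h4 : (p ⊔ ⊥ ⊔ ⊤ ⊓ ⊤ : Submodule ℂ (EuclideanSpace ℂ (Fin m))) ⊓ ((p ⊔ ⊥)ᗮ ⊔ (⊤ ⊓ ⊤)ᗮ) = pᗮ := by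
    simp [Submodule.top_orthogonal_eq_bot]
  rw [h4]
  have h1 : p ⊔ pᗮ = ⊤ := Submodule.sup_orthogonal_of_hasOrthogonalProjection
  have h2 : p ⊓ pᗮ = ⊥ := Submodule.inf_orthogonal_eq_bot p
  have := Submodule.finrank_sup_add_finrank_inf_eq p pᗮ
  rw [h1, h2, hdp] at this
  simp [htot] at this
  omega
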